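/- Let w be an increasing convex function in 𝓘 and let σ_w(x) denote the unique minimizer of y ↦ ℓ(x − y) + β·w(y) over [0, x]. Then σ_w(x) = 0 if and only if x ≤ η. -/

import Mathlib

open Set Filter Topology

/-- The candidate class 𝓘: continuous functions on `[0, x̂]` with `ℓ'(0)·x ≤ w(x) ≤ ℓ(x)`. -/
def candidateClass (xhat : ℝ) (ℓ ℓd : ℝ → ℝ) : Set (ℝ → ℝ) :=
  {w | ContinuousOn w (Set.Icc 0 xhat) ∧
    ∀ x ∈ Set.Icc 0 xhat, ℓd 0 * x ≤ w x ∧ w x ≤ ℓ x}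

/-- for an increasing convex `w ∈ 𝓘`, the unique minimizer `σ_w(x)` of
`y ↦ ℓ(x − y) + β·w(y)` over `[0, x]` satisfies `σ_w(x) = 0` if and only if `x ≤ η`. -/
theorem minimizer_zero_iff_below_eta
    (xhat : ℝ) (hxhat : 0 < xhat)
    (ℓ ℓd : ℝ → ℝ)
    (hderiv : ∀ x ∈ Set.Icc 0 xhat, HasDerivAt ℓ (ℓd x) x)
    (hcont_deriv : ContinuousOn ℓd (Set.Icc 0 xhat))
    (hconv : StrictConvexOn ℝ (Set.Icc 0 xhat) ℓ)
    (hzero : ℓ 0 = 0)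
    (hpos : ∀ x ∈ Set.Icc 0 xhat, 0 < ℓd x)
    (β : ℝ) (hβ : 1 < β)
    (η : ℝ)
    (hη_mem : η ∈ Set.Icc 0 xhat ∧ ℓd η ≤ β * ℓd 0)
    (hη_max : ∀ x ∈ Set.Icc 0 xhat, ℓd x ≤ β * ℓd 0 → x ≤ η)
    (w : ℝ → ℝ)
    (hw_mem : w ∈ candidateClass xhat ℓ ℓd)
    (hw_mono : MonotoneOn w (Set.Icc 0 xhat))
    (hw_conv : ConvexOn ℝ (Set.Icc 0 xhat) w)
    (σ : ℝ → ℝ)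
    (hσ : ∀ x ∈ Set.Icc 0 xhat,
      σ x ∈ Set.Icc 0 x ∧
      ∀ y ∈ Set.Icc 0 x, y ≠ σ x → ℓ (x - σ x) + β * w (σ x) < ℓ (x - y) + β * w y) :
    ∀ x ∈ Set.Icc 0 xhat, (σ x = 0 ↔ x ≤ η) := by
  obtain ⟨hwc, hwb⟩ := hw_mem
  have h0mem : (0:ℝ) ∈ Set.Icc 0 xhat := ⟨le_refl _, hxhat.le⟩
  have hw0 : w 0 = 0 := by
    have h := hwb 0 h0mem
    have h1 := h.1; have h2 := h.2
    rw [hzero] at h2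
    nlinarith
  -- ℓd is strictly monotone on [0, xhat]
  have hmono : StrictMonoOn ℓd (Set.Icc 0 xhat) := by
    intro a ha b hb hab
    have h1 := hconv.lt_slope_of_hasDerivAt ha hb hab (hderiv a ha)
    have h2 := hconv.slope_lt_of_hasDerivAt ha hb hab (hderiv b hb)
    exact h1.trans h2
  -- Mean value theorem helper
  have mvt : ∀ a b : ℝ, 0 ≤ a → b ≤ xhat → a < b →
      ∃ c ∈ Set.Ioo a b, ℓ b - ℓ a = ℓd c * (b - a) := by
    intro a b ha hb hab
    have hsub : Set.Icc a b ⊆ Set.Icc 0 xhat := Set.Icc_subset_Icc ha hb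
    have hcont : ContinuousOn ℓ (Set.Icc a b) := fun z hz =>
      ((hderiv z (hsub hz)).continuousAt).continuousWithinAt
    obtain ⟨c, hc, heq⟩ := exists_hasDerivAt_eq_slope ℓ ℓd hab hcont
      (fun z hz => hderiv z (hsub (Set.Ioo_subset_Icc_self hz)))
    refine ⟨c, hc, ?_⟩
    rw [eq_div_iff (by linarith : b - a ≠ 0)] at heq
    linarith
  intro x hx
  obtain ⟨hσmem, hσmin⟩ := hσ x hx
  have hx0 : (0:ℝ) ≤ x := hx.1
  have hxx : x ≤ xhat := hx.2
  constructor
  · -- σ x = 0 → x ≤ η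
    intro hσ0
    by_contra hgt
    push_neg at hgt
    have hx_pos : 0 < x := lt_of_le_of_lt hη_mem.1.1 hgt
    have hldx : β * ℓd 0 < ℓd x := by
      by_contra hle
      push_neg at hle
      exact absurd (hη_max x hx hle) (not_le.mpr hgt)
    -- find small y > 0 with β * ℓd y < ℓd (x - y)
    have hc1 : ContinuousWithinAt (fun y => β * ℓd y - ℓd (x - y)) (Set.Icc 0 x) 0 := by
      have hsub : Set.Icc (0:ℝ) x ⊆ Set.Icc 0 xhat := Set.Icc_subset_Icc le_rfl hxx
      have ha : ContinuousWithinAt ℓd (Set.Icc 0 x) 0 :=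
        (hcont_deriv.continuousWithinAt h0mem).mono hsub
      have hmap : Filter.Tendsto (fun y => x - y) (𝓝[Set.Icc 0 x] 0) (𝓝[Set.Icc 0 xhat] x) := by
        apply tendsto_nhdsWithin_of_tendsto_nhds_of_eventually_within
        · have : Filter.Tendsto (fun y : ℝ => x - y) (𝓝 0) (𝓝 (x - 0)) :=
            (continuous_const.sub continuous_id).tendsto 0
          simpa using this.mono_left nhdsWithin_le_nhds
        · filter_upwards [self_mem_nhdsWithin] with y hy
          exact ⟨by linarith [hy.2], by linarith [hy.1]⟩
      have hb : ContinuousWithinAt (fun y => ℓd (x - y)) (Set.Icc 0 x) 0 := by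
        have h2 := (hcont_deriv.continuousWithinAt ⟨hx0, hxx⟩).tendsto.comp hmap
        simpa [ContinuousWithinAt, Function.comp_def, sub_zero] using h2
      exact (continuousWithinAt_const.mul ha).sub (by simpa using hb)
    have hg0 : β * ℓd 0 - ℓd (x - 0) < 0 := by simpa using sub_neg.mpr hldx
    have hev : ∀ᶠ y in 𝓝[Set.Icc 0 x] 0, β * ℓd y - ℓd (x - y) < 0 := by
      have : Set.Iio (0:ℝ) ∈ 𝓝 (β * ℓd 0 - ℓd (x - 0)) := Iio_mem_nhds hg0
      exact hc1 this
    have hev' : ∀ᶠ y in 𝓝[Set.Ioc 0 x] 0, β * ℓd y - ℓd (x - y) < 0 :=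
      hev.filter_mono (nhdsWithin_mono 0 Set.Ioc_subset_Icc_self)
    haveI : (𝓝[Set.Ioc 0 x] (0:ℝ)).NeBot := left_nhdsWithin_Ioc_neBot hx_pos
    obtain ⟨y, hgy, hy⟩ := (hev'.and self_mem_nhdsWithin).exists
    obtain ⟨hy0, hyx⟩ := hy
    -- estimates
    have hy_mem : y ∈ Set.Icc 0 xhat := ⟨hy0.le, hyx.trans hxx⟩
    have hxy_mem : x - y ∈ Set.Icc 0 xhat := ⟨by linarith, by linarith⟩
    -- w y ≤ ℓ y ≤ ℓd y * y
    obtain ⟨c1, hc1m, hc1e⟩ := mvt 0 y le_rfl hy_mem.2 hy0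
    have hc1lt : ℓd c1 < ℓd y := hmono ⟨hc1m.1.le, hc1m.2.le.trans hy_mem.2⟩ hy_mem hc1m.2
    have hwy : w y ≤ ℓd y * y := by
      have := (hwb y hy_mem).2
      rw [hzero] at hc1e
      nlinarith
    -- ℓ x - ℓ (x - y) ≥ ℓd (x - y) * y
    obtain ⟨c2, hc2m, hc2e⟩ := mvt (x - y) x hxy_mem.1 hxx (by linarith)
    have hc2gt : ℓd (x - y) < ℓd c2 :=
      hmono hxy_mem ⟨by linarith [hc2m.1, hxy_mem.1], hc2m.2.le.trans hxx⟩ hc2m.1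
    -- contradiction with strict minimality at 0
    have hmin := hσmin y ⟨hy0.le, hyx⟩ (by rw [hσ0]; exact hy0.ne')
    rw [hσ0, sub_zero, hw0] at hmin
    nlinarith [hmin, hgy]
  · -- x ≤ η → σ x = 0
    intro hxη
    by_contra hne
    have hs0 : 0 < σ x := lt_of_le_of_ne hσmem.1 (Ne.symm hne)
    set s := σ x with hs
    have hsx : s ≤ x := hσmem.2
    have hs_mem : s ∈ Set.Icc 0 xhat := ⟨hs0.le, hsx.trans hxx⟩
    have hxs_mem : x - s ∈ Set.Icc 0 xhat := ⟨by linarith, by linarith⟩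
    -- ℓ x - ℓ (x - s) = ℓd c * s with ℓd c < ℓd x ≤ ℓd η ≤ β ℓd 0
    obtain ⟨c, hcm, hce⟩ := mvt (x - s) x hxs_mem.1 hxx (by linarith)
    have hc_mem : c ∈ Set.Icc 0 xhat := ⟨by linarith [hcm.1, hxs_mem.1], hcm.2.le.trans hxx⟩
    have hcx : ℓd c < ℓd x := hmono hc_mem hx hcm.2
    have hxη' : ℓd x ≤ ℓd η := hmono.monotoneOn hx hη_mem.1 hxη
    have hcb : ℓd c < β * ℓd 0 := by linarith [hη_mem.2]
    -- w s ≥ ℓd 0 * s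
    have hws : ℓd 0 * s ≤ w s := (hwb s hs_mem).1
    -- strict minimality at s beats 0
    have hmin := hσmin 0 ⟨le_rfl, hx0⟩ (Ne.symm hne)
    rw [sub_zero, hw0] at hmin
    nlinarith [hmin]
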